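/- Let P = Σ a_i T^i be a univariate polynomial of degree d with integer coefficients of absolute value less than 2^τ, and let R(Z) = Res_T(P(T) - Z, P'(T)) = Σ_{i=0}^{d-1} r_i Z^i. Then for all i ∈ {0,...,d-1}, |r_i| < 3^(-d/2) · (2^τ √((d+1)³))^d · C(d-1, i) · (2^τ √(d+1) - 1)^(d-1-i). -/

import Mathlib

open Polynomial

/-- The Sylvester matrix of `f` (viewed as having degree `n`) and `g` (viewed as
having degree `m`): `m` rows built from the coefficients of `f` followed by
`n` rows built from the coefficients of `g`. Its determinant is the resultant. -/
def sylvester {R : Type*} [CommRing R] (f g : Polynomial R) (n m : ℕ) :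
    Matrix (Fin (m + n)) (Fin (m + n)) R :=
  Matrix.of fun i j =>
    if (i : ℕ) < m then
      (if (i : ℕ) ≤ (j : ℕ) ∧ (j : ℕ) ≤ n + i then f.coeff (n + i - j) else 0)
    else
      (if (i : ℕ) - m ≤ (j : ℕ) ∧ (j : ℕ) ≤ m + ((i : ℕ) - m) then
        g.coeff (m + ((i : ℕ) - m) - j) else 0)


section ResultantAux
open Matrix Finset


lemma prod_le_one_of_sum_eq {n : ℕ} (μ : Fin n → ℝ) (h0 : ∀ i, 0 ≤ μ i)
    (hs : ∑ i, μ i = (n : ℝ)) : ∏ i, μ i ≤ 1 := by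
  rcases Nat.eq_zero_or_pos n with hn | hn
  · subst hn; simp
  have hnR : (0:ℝ) < n := by exact_mod_cast hn
  have h := Real.geom_mean_le_arith_mean_weighted Finset.univ (fun _ => (n:ℝ)⁻¹) μ
    (fun i _ => by positivity) (by simp [Finset.card_univ]; field_simp) (fun i _ => h0 i)
  have h2 : ∑ i, (n:ℝ)⁻¹ * μ i = 1 := by
    rw [← Finset.mul_sum, hs]; field_simp
  rw [h2] at h
  have h3 : (∏ i, μ i ^ ((n:ℝ)⁻¹)) ^ (n:ℕ) ≤ 1 := by
    exact pow_le_one₀ (Finset.prod_nonneg fun i _ => Real.rpow_nonneg (h0 i) _) h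
  calc ∏ i, μ i = (∏ i, μ i ^ ((n:ℝ)⁻¹)) ^ (n:ℕ) := by
        rw [← Finset.prod_pow]
        refine Finset.prod_congr rfl fun i _ => ?_
        rw [← Real.rpow_natCast (μ i ^ ((n:ℝ)⁻¹)) n, ← Real.rpow_mul (h0 i)]
        field_simp
        simp
    _ ≤ 1 := h3

lemma det_le_one_of_psd_diag_one {n : ℕ} {G : Matrix (Fin n) (Fin n) ℝ}
    (hG : G.PosSemidef) (hdiag : ∀ i, G i i = 1) : G.det ≤ 1 := by
  have hH : G.IsHermitian := hG.1
  have htr : G.trace = (n : ℝ) := by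
    simp [Matrix.trace, Matrix.diag, hdiag]
  have htr2 : G.trace = ∑ i, hH.eigenvalues i := by
    simpa using hH.trace_eq_sum_eigenvalues
  have hdet : G.det = ∏ i, hH.eigenvalues i := by
    have := hH.det_eq_prod_eigenvalues
    simpa using this
  rw [hdet]
  exact prod_le_one_of_sum_eq _ (hG.eigenvalues_nonneg) (by rw [← htr2, htr])

/-- **Hadamard's inequality** (squared form). -/
lemma hadamard_sq {n : ℕ} (A : Matrix (Fin n) (Fin n) ℝ) :
    A.det ^ 2 ≤ ∏ i, ∑ j, (A i j) ^ 2 := by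
  set N : Fin n → ℝ := fun i => ∑ j, (A i j) ^ 2 with hN
  have hN0 : ∀ i, 0 ≤ N i := fun i => Finset.sum_nonneg fun j _ => sq_nonneg _
  by_cases hz : ∃ i, N i = 0
  · obtain ⟨i, hi⟩ := hz
    have hrow : ∀ j, A i j = 0 := by
      intro j
      have h1 : (A i j) ^ 2 ≤ 0 := hi ▸ Finset.single_le_sum (fun j _ => sq_nonneg (A i j)) (Finset.mem_univ j)
      nlinarith [sq_nonneg (A i j)]
    rw [Matrix.det_eq_zero_of_row_eq_zero i hrow]
    have : ∏ k, N k = 0 := Finset.prod_eq_zero (Finset.mem_univ i) hi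
    simp [this]
  push_neg at hz
  have hNpos : ∀ i, 0 < N i := fun i => lt_of_le_of_ne (hN0 i) (Ne.symm (hz i))
  set B : Matrix (Fin n) (Fin n) ℝ := Matrix.of fun i j => A i j / Real.sqrt (N i) with hB
  have hBA : B = Matrix.of fun i j => (fun i => (Real.sqrt (N i))⁻¹) i * A i j := by
    ext i j; simp [hB, div_eq_inv_mul]
  have hdetB : B.det = (∏ i, (Real.sqrt (N i))⁻¹) * A.det := by
    rw [hBA]; exact Matrix.det_mul_column _ _
  have hG : (B * Bᴴ).PosSemidef := Matrix.posSemidef_self_mul_conjTranspose B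
  have hdiag : ∀ i, (B * Bᴴ) i i = 1 := by
    intro i
    have : (B * Bᴴ) i i = ∑ j, (B i j)^2 := by
      simp [Matrix.mul_apply, Matrix.conjTranspose_apply, sq]
    rw [this]
    have heq : ∑ j, (B i j) ^ 2 = (∑ j, (A i j)^2) / N i := by
      rw [Finset.sum_div]
      refine Finset.sum_congr rfl fun j _ => ?_
      rw [hB]
      simp only [Matrix.of_apply, div_pow]
      rw [Real.sq_sqrt (hN0 i)]
    have hNi : (∑ j, (A i j)^2) = N i := rfl
    rw [heq, hNi, div_self (hNpos i).ne']
  have h1 : (B * Bᴴ).det ≤ 1 := det_le_one_of_psd_diag_one hG hdiag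
  have h2 : (B * Bᴴ).det = B.det ^ 2 := by
    rw [Matrix.det_mul, Matrix.det_conjTranspose, sq]
    simp
  have h3 : B.det ^ 2 = A.det ^ 2 / ∏ i, N i := by
    rw [hdetB, mul_pow, ← Finset.prod_pow]
    have : ∀ i ∈ Finset.univ, ((Real.sqrt (N i))⁻¹) ^ 2 = (N i)⁻¹ := fun i _ => by
      rw [inv_pow, Real.sq_sqrt (hN0 i)]
    rw [Finset.prod_congr rfl this, Finset.prod_inv_distrib, inv_mul_eq_div]
  have hprodpos : 0 < ∏ i, N i := Finset.prod_pos fun i _ => hNpos i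
  rw [h2, h3, div_le_one hprodpos] at h1
  exact h1


lemma det_split {R : Type*} [CommRing R] {n : ℕ} (A B : Matrix (Fin n) (Fin n) R)
    (s : Finset (Fin n)) (M : Matrix (Fin n) (Fin n) R) :
    (Matrix.of fun k => if k ∈ s then A k + B k else M k).det
      = ∑ S ∈ s.powerset, (Matrix.of fun k => if k ∈ S then B k
          else if k ∈ s then A k else M k).det := by
  induction s using Finset.induction_on generalizing M with
  | empty => simp
  | @insert a s ha ih =>
    have h1 : (Matrix.of fun k => if k ∈ insert a s then A k + B k else M k)
        = Matrix.updateRow (Matrix.of fun k => if k ∈ s then A k + B k else M k) a (A a + B a) := by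
      ext k j
      rcases eq_or_ne k a with rfl | hk
      · simp [Matrix.updateRow_apply, ha]
      · simp [Matrix.updateRow_apply, hk, Finset.mem_insert, hk]
    have key : ∀ v : Fin n → R,
        Matrix.updateRow (Matrix.of fun k => if k ∈ s then A k + B k else M k) a v
          = Matrix.of fun k => if k ∈ s then A k + B k else (Matrix.updateRow M a v) k := by
      intro v; ext k j
      rcases eq_or_ne k a with rfl | hk
      · simp [Matrix.updateRow_apply, ha]
      · simp [Matrix.updateRow_apply, hk]
    rw [h1, Matrix.det_updateRow_add, key, key, ih, ih,
      Finset.sum_powerset_insert ha]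
    congr 1
    · refine Finset.sum_congr rfl fun S hS => ?_
      have hSs : S ⊆ s := Finset.mem_powerset.mp hS
      congr 1
      ext k j
      by_cases hk : k = a
      · subst hk
        have haS : k ∉ S := fun h => ha (hSs h)
        simp [haS, ha, Matrix.updateRow_apply]
      · simp [Matrix.updateRow_apply, hk, Finset.mem_insert]
    · refine Finset.sum_congr rfl fun S hS => ?_
      have hSs : S ⊆ s := Finset.mem_powerset.mp hS
      congr 1
      ext k j
      by_cases hk : k = a
      · subst hk
        simp [ha, Matrix.updateRow_apply]
      · simp [Matrix.updateRow_apply, hk, Finset.mem_insert, fun h => ha (hSs h)]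

lemma det_add_expand {R : Type*} [CommRing R] {n : ℕ} (A B : Matrix (Fin n) (Fin n) R) :
    (A + B).det = ∑ S : Finset (Fin n),
      (Matrix.of fun k => if k ∈ S then B k else A k).det := by
  have h := det_split A B Finset.univ A
  have h1 : (Matrix.of fun k => if k ∈ (Finset.univ : Finset (Fin n)) then A k + B k else A k)
      = A + B := by ext k j; simp
  rw [h1] at h
  rw [h, Finset.powerset_univ]
  exact Finset.sum_congr rfl fun S _ => by congr 1; ext k j; simp


lemma window_sum_le {n : ℕ} (lo hi : ℕ) (g : ℕ → ℝ) (hg : ∀ t, 0 ≤ g t) :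
    ∑ j : Fin n, (if lo ≤ (j : ℕ) ∧ (j : ℕ) ≤ hi then g (hi - (j : ℕ)) else 0)
      ≤ ∑ t ∈ Finset.range (hi - lo + 1), g t := by
  rw [← Finset.sum_filter]
  have hinj : Set.InjOn (fun j : Fin n => hi - (j : ℕ))
      ↑(Finset.univ.filter fun j : Fin n => lo ≤ (j : ℕ) ∧ (j : ℕ) ≤ hi) := by
    intro a ha b hb hab
    simp only [Finset.coe_filter, Set.mem_setOf_eq] at ha hb
    have hab' : hi - (a : ℕ) = hi - (b : ℕ) := hab
    have : (a : ℕ) = (b : ℕ) := by omega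
    exact Fin.ext this
  rw [← Finset.sum_image hinj]
  apply Finset.sum_le_sum_of_subset_of_nonneg
  · intro t ht
    simp only [Finset.mem_image, Finset.mem_filter] at ht
    obtain ⟨j, ⟨_, hj⟩, rfl⟩ := ht
    simp only [Finset.mem_range]
    omega
  · exact fun t _ _ => hg t

lemma sum_sq_le (d : ℕ) : ∑ t ∈ Finset.range d, ((t : ℝ) + 1) ^ 2 ≤ ((d : ℝ) + 1) ^ 3 / 3 := by
  induction d with
  | zero => norm_num
  | succ d ih =>
    rw [Finset.sum_range_succ]
    push_cast
    push_cast at ih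
    have h2 : 3 * ((d : ℝ) + 1) ^ 2 ≤ ((d : ℝ) + 1 + 1) ^ 3 - ((d : ℝ) + 1) ^ 3 := by
      nlinarith [sq_nonneg (d : ℝ), Nat.cast_nonneg (α := ℝ) d]
    linarith

def Bz (d : ℕ) : Matrix (Fin (d - 1 + d)) (Fin (d - 1 + d)) ℤ :=
  Matrix.of fun i j => if (i : ℕ) < d - 1 ∧ (j : ℕ) = d + i then -1 else 0

variable (P : Polynomial ℤ) (d : ℕ)


lemma syl_decomp (hd : 1 ≤ d) :
    _root_.sylvester (P.map Polynomial.C - Polynomial.C Polynomial.X)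
        ((derivative P).map Polynomial.C) d (d - 1)
      = (_root_.sylvester P (derivative P) d (d - 1)).map Polynomial.C
        + Matrix.of (fun i j => Polynomial.C (Bz d i j) * Polynomial.X) := by
  ext i j
  simp only [_root_.sylvester, Bz, Matrix.of_apply, Matrix.add_apply, Matrix.map_apply]
  by_cases hi : (i : ℕ) < d - 1
  · simp only [hi, if_true, true_and]
    by_cases hc : (i : ℕ) ≤ (j : ℕ) ∧ (j : ℕ) ≤ d + i
    · simp only [hc, if_true]
      rw [Polynomial.coeff_sub, Polynomial.coeff_map, Polynomial.coeff_C]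
      by_cases hj : (j : ℕ) = d + (i : ℕ)
      · have h0 : d + (i : ℕ) - (j : ℕ) = 0 := by omega
        simp [h0, hj, sub_eq_add_neg]
      · have h0 : d + (i : ℕ) - (j : ℕ) ≠ 0 := by omega
        simp [h0, hj]
    · simp only [hc, if_false]
      have hj : ¬ ((j : ℕ) = d + (i : ℕ)) := by omega
      simp [hj]
  · simp only [hi, if_false, false_and]
    simp [Polynomial.coeff_map]

/-- the mixed integer matrix -/
noncomputable def mixZ (S : Finset (Fin (d - 1 + d))) : Matrix (Fin (d - 1 + d)) (Fin (d - 1 + d)) ℤ :=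
  Matrix.of fun k => if k ∈ S then Bz d k else (_root_.sylvester P (derivative P) d (d - 1)) k

lemma coeff_det_syl (hd : 1 ≤ d) (i : ℕ) :
    (_root_.sylvester (P.map Polynomial.C - Polynomial.C Polynomial.X)
        ((derivative P).map Polynomial.C) d (d - 1)).det.coeff i
      = ∑ S : Finset (Fin (d - 1 + d)), if S.card = i then (mixZ P d S).det else 0 := by
  rw [syl_decomp P d hd, det_add_expand]
  have hterm : ∀ S : Finset (Fin (d - 1 + d)),
      (Matrix.of fun k => if k ∈ S then
          (Matrix.of (fun i j => Polynomial.C (Bz d i j) * Polynomial.X)) k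
        else ((_root_.sylvester P (derivative P) d (d - 1)).map Polynomial.C) k).det
      = Polynomial.monomial S.card ((mixZ P d S).det) := by
    intro S
    have heq : (Matrix.of fun k => if k ∈ S then
          (Matrix.of (fun i j => Polynomial.C (Bz d i j) * Polynomial.X)) k
        else ((_root_.sylvester P (derivative P) d (d - 1)).map Polynomial.C) k)
        = Matrix.of (fun k l => (fun k => if k ∈ S then (Polynomial.X : Polynomial ℤ) else 1) k
            * ((mixZ P d S).map Polynomial.C) k l) := by
      ext k l
      by_cases hk : k ∈ S <;> simp [hk, mixZ, mul_comm]
    rw [heq, Matrix.det_mul_column, ← RingHom.mapMatrix_apply, ← RingHom.map_det]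
    rw [Finset.prod_ite_mem, Finset.univ_inter, Finset.prod_const]
    rw [mul_comm, Polynomial.C_mul_X_pow_eq_monomial]
  simp_rw [hterm]
  rw [Polynomial.finset_sum_coeff]
  exact Finset.sum_congr rfl fun S _ => by rw [Polynomial.coeff_monomial]


variable (P : Polynomial ℤ) (d τ : ℕ)

lemma Bz_rowsum (hd : 1 ≤ d) (k : Fin (d - 1 + d)) (hk : (k : ℕ) < d - 1) :
    ∑ j, ((Bz d k j : ℤ) : ℝ) ^ 2 = 1 := by
  have hlt : d + (k : ℕ) < d - 1 + d := by omega
  set j0 : Fin (d - 1 + d) := ⟨d + (k : ℕ), hlt⟩ with hj0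
  have key : ∀ j : Fin (d - 1 + d),
      ((Bz d k j : ℤ) : ℝ) ^ 2 = if j = j0 then 1 else 0 := by
    intro j
    simp only [Bz, Matrix.of_apply, hk, true_and]
    by_cases hj : (j : ℕ) = d + (k : ℕ)
    · have : j = j0 := Fin.ext (by simpa [hj0])
      simp [hj, this, hj0]
    · have : j ≠ j0 := fun h => hj (by rw [h])
      simp [hj, this]
  rw [Finset.sum_congr rfl fun j _ => key j, Finset.sum_ite_eq' Finset.univ j0 (fun _ => (1:ℝ))]
  simp

lemma Az_rowsum_P (hτ : ∀ i, |P.coeff i| ≤ 2 ^ τ - 1)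
    (k : Fin (d - 1 + d)) (hk : (k : ℕ) < d - 1) :
    ∑ j, (((_root_.sylvester P (derivative P) d (d - 1)) k j : ℤ) : ℝ) ^ 2
      ≤ ((d : ℝ) + 1) * ((2:ℝ) ^ τ - 1) ^ 2 := by
  have hcast : ∀ t : ℕ, (((P.coeff t : ℤ) : ℝ)) ^ 2 ≤ ((2:ℝ) ^ τ - 1) ^ 2 := by
    intro t
    have h := hτ t
    have h1 : |((P.coeff t : ℤ) : ℝ)| ≤ (2:ℝ) ^ τ - 1 := by
      rw [← Int.cast_abs]
      calc ((|P.coeff t| : ℤ) : ℝ) ≤ ((2 ^ τ - 1 : ℤ) : ℝ) := by exact_mod_cast h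
        _ = (2:ℝ) ^ τ - 1 := by push_cast; ring
    calc ((P.coeff t : ℤ) : ℝ) ^ 2 = |((P.coeff t : ℤ) : ℝ)| ^ 2 := (sq_abs _).symm
      _ ≤ ((2:ℝ) ^ τ - 1) ^ 2 := by
          apply pow_le_pow_left₀ (abs_nonneg _) h1
  have hent : ∀ j : Fin (d - 1 + d),
      (((_root_.sylvester P (derivative P) d (d - 1)) k j : ℤ) : ℝ) ^ 2
        = if (k : ℕ) ≤ (j : ℕ) ∧ (j : ℕ) ≤ d + (k : ℕ) then
            (fun t => (((P.coeff t : ℤ) : ℝ)) ^ 2) (d + (k : ℕ) - (j : ℕ)) else 0 := by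
    intro j
    simp only [_root_.sylvester, Matrix.of_apply, hk, if_true]
    split <;> simp
  rw [Finset.sum_congr rfl fun j _ => hent j]
  calc _ ≤ ∑ t ∈ Finset.range (d + (k : ℕ) - (k : ℕ) + 1), (((P.coeff t : ℤ) : ℝ)) ^ 2 :=
        window_sum_le _ _ _ (fun t => sq_nonneg _)
    _ ≤ ((d : ℝ) + 1) * ((2:ℝ) ^ τ - 1) ^ 2 := by
        have hcard : d + (k : ℕ) - (k : ℕ) + 1 = d + 1 := by omega
        rw [hcard]
        calc ∑ t ∈ Finset.range (d + 1), (((P.coeff t : ℤ) : ℝ)) ^ 2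
            ≤ ∑ _t ∈ Finset.range (d + 1), ((2:ℝ) ^ τ - 1) ^ 2 :=
              Finset.sum_le_sum fun t _ => hcast t
          _ = ((d : ℝ) + 1) * ((2:ℝ) ^ τ - 1) ^ 2 := by
              rw [Finset.sum_const, Finset.card_range, nsmul_eq_mul]; push_cast; ring

lemma Az_rowsum_D (hd : 1 ≤ d) (hτ : ∀ i, |P.coeff i| ≤ 2 ^ τ - 1)
    (k : Fin (d - 1 + d)) (hk : ¬ ((k : ℕ) < d - 1)) :
    ∑ j, (((_root_.sylvester P (derivative P) d (d - 1)) k j : ℤ) : ℝ) ^ 2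
      ≤ ((2:ℝ) ^ τ - 1) ^ 2 * (((d : ℝ) + 1) ^ 3 / 3) := by
  have hu : (0:ℝ) ≤ (2:ℝ) ^ τ - 1 := by
    have : (1:ℝ) ≤ 2 ^ τ := one_le_pow₀ (by norm_num)
    linarith
  have hcast : ∀ t : ℕ, ((((derivative P).coeff t : ℤ) : ℝ)) ^ 2
      ≤ ((t : ℝ) + 1) ^ 2 * ((2:ℝ) ^ τ - 1) ^ 2 := by
    intro t
    rw [Polynomial.coeff_derivative]
    have h := hτ (t + 1)
    have h1 : |((P.coeff (t+1) : ℤ) : ℝ)| ≤ (2:ℝ) ^ τ - 1 := by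
      rw [← Int.cast_abs]
      calc ((|P.coeff (t+1)| : ℤ) : ℝ) ≤ ((2 ^ τ - 1 : ℤ) : ℝ) := by exact_mod_cast h
        _ = (2:ℝ) ^ τ - 1 := by push_cast; ring
    have ha2 : ((P.coeff (t+1) : ℤ) : ℝ) ^ 2 ≤ ((2:ℝ) ^ τ - 1) ^ 2 := by
      rw [← sq_abs]; exact pow_le_pow_left₀ (abs_nonneg _) h1 2
    push_cast
    nlinarith [ha2, sq_nonneg ((t:ℝ)+1)]
  have hent : ∀ j : Fin (d - 1 + d),
      (((_root_.sylvester P (derivative P) d (d - 1)) k j : ℤ) : ℝ) ^ 2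
        = if (k : ℕ) - (d-1) ≤ (j : ℕ) ∧ (j : ℕ) ≤ (d-1) + ((k : ℕ) - (d-1)) then
            (fun t => ((((derivative P).coeff t : ℤ) : ℝ)) ^ 2)
              ((d-1) + ((k : ℕ) - (d-1)) - (j : ℕ)) else 0 := by
    intro j
    simp only [_root_.sylvester, Matrix.of_apply, hk, if_false]
    split <;> simp
  rw [Finset.sum_congr rfl fun j _ => hent j]
  calc _ ≤ ∑ t ∈ Finset.range ((d-1) + ((k : ℕ) - (d-1)) - ((k : ℕ) - (d-1)) + 1),
          ((((derivative P).coeff t : ℤ) : ℝ)) ^ 2 :=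
        window_sum_le _ _ _ (fun t => sq_nonneg _)
    _ ≤ ((2:ℝ) ^ τ - 1) ^ 2 * (((d : ℝ) + 1) ^ 3 / 3) := by
        have hcard : (d-1) + ((k : ℕ) - (d-1)) - ((k : ℕ) - (d-1)) + 1 = d := by omega
        rw [hcard]
        calc ∑ t ∈ Finset.range d, ((((derivative P).coeff t : ℤ) : ℝ)) ^ 2
            ≤ ∑ t ∈ Finset.range d, ((t : ℝ) + 1) ^ 2 * ((2:ℝ) ^ τ - 1) ^ 2 :=
              Finset.sum_le_sum fun t _ => hcast t
          _ = ((2:ℝ) ^ τ - 1) ^ 2 * ∑ t ∈ Finset.range d, ((t : ℝ) + 1) ^ 2 := by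
              rw [Finset.mul_sum]; exact Finset.sum_congr rfl fun t _ => by ring
          _ ≤ ((2:ℝ) ^ τ - 1) ^ 2 * (((d : ℝ) + 1) ^ 3 / 3) :=
              mul_le_mul_of_nonneg_left (sum_sq_le d) (sq_nonneg _)


lemma cardF (d : ℕ) (hd : 1 ≤ d) :
    (Finset.univ.filter fun k : Fin (d - 1 + d) => (k : ℕ) < d - 1).card = d - 1 := by
  have : (Finset.univ.filter fun k : Fin (d - 1 + d) => (k : ℕ) < d - 1)
      = (Finset.univ : Finset (Fin (d - 1))).map
        ⟨Fin.castAdd d, fun a b h => by simpa [Fin.ext_iff] using congrArg Fin.val h⟩ := by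
    ext j
    simp only [Finset.mem_filter, Finset.mem_univ, true_and, Finset.mem_map,
      Function.Embedding.coeFn_mk]
    constructor
    · intro hj; exact ⟨⟨(j : ℕ), hj⟩, Fin.ext rfl⟩
    · rintro ⟨a, rfl⟩; exact a.2
  rw [this, Finset.card_map, Finset.card_univ, Fintype.card_fin]

lemma cardcoF (d : ℕ) (hd : 1 ≤ d) :
    (Finset.univ.filter fun k : Fin (d - 1 + d) => ¬ ((k : ℕ) < d - 1)).card = d := by
  have h := Finset.card_filter_add_card_filter_not
    (s := (Finset.univ : Finset (Fin (d - 1 + d)))) (p := fun k => (k : ℕ) < d - 1)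
  rw [cardF d hd] at h
  rw [Finset.card_univ, Fintype.card_fin] at h
  omega

lemma detS_le (P : Polynomial ℤ) (d τ : ℕ) (hd : 1 ≤ d)
    (hτ : ∀ i, |P.coeff i| ≤ 2 ^ τ - 1) (S : Finset (Fin (d - 1 + d)))
    (hSF : ∀ k ∈ S, (k : ℕ) < d - 1) :
    |(((mixZ P d S).det : ℤ) : ℝ)|
      ≤ (((2:ℝ) ^ τ - 1) * Real.sqrt ((d : ℝ) + 1)) ^ (d - 1 - S.card)
        * (((2:ℝ) ^ τ - 1) * Real.sqrt (((d : ℝ) + 1) ^ 3 / 3)) ^ d := by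
  set u : ℝ := (2:ℝ) ^ τ - 1 with hu
  have hu0 : 0 ≤ u := by
    have : (1:ℝ) ≤ 2 ^ τ := one_le_pow₀ (by norm_num)
    simp [hu]; linarith
  have hd1 : (0:ℝ) ≤ (d : ℝ) + 1 := by positivity
  set A : Matrix (Fin (d - 1 + d)) (Fin (d - 1 + d)) ℝ :=
    (mixZ P d S).map (Int.cast : ℤ → ℝ) with hA
  have hdetA : A.det = (((mixZ P d S).det : ℤ) : ℝ) := by
    rw [hA]
    exact (RingHom.map_det (Int.castRingHom ℝ) (mixZ P d S)).symm
  have hH := hadamard_sq A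
  -- bound the product of row sums
  set csq : Fin (d - 1 + d) → ℝ := fun k =>
    if k ∈ S then 1 else if (k : ℕ) < d - 1 then ((d : ℝ) + 1) * u ^ 2
      else u ^ 2 * (((d : ℝ) + 1) ^ 3 / 3) with hcsq
  have hrow : ∀ k, ∑ j, (A k j) ^ 2 ≤ csq k := by
    intro k
    by_cases hk : k ∈ S
    · have hklt := hSF k hk
      have : ∀ j, A k j = ((Bz d k j : ℤ) : ℝ) := by
        intro j; simp [hA, mixZ, hk]
      simp only [hcsq, hk, if_true]
      rw [Finset.sum_congr rfl fun j _ => by rw [this j]]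
      exact le_of_eq (Bz_rowsum d hd k hklt)
    · have : ∀ j, A k j = (((_root_.sylvester P (derivative P) d (d - 1)) k j : ℤ) : ℝ) := by
        intro j; simp [hA, mixZ, hk]
      rw [Finset.sum_congr rfl fun j _ => by rw [this j]]
      by_cases hklt : (k : ℕ) < d - 1
      · simp only [hcsq, hk, if_false, hklt, if_true]
        exact Az_rowsum_P P d τ hτ k hklt
      · simp only [hcsq, hk, if_false, hklt]
        exact Az_rowsum_D P d τ hd hτ k hklt
  have hprodle : ∏ k, ∑ j, (A k j) ^ 2 ≤ ∏ k, csq k :=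
    Finset.prod_le_prod (fun k _ => Finset.sum_nonneg fun j _ => sq_nonneg _)
      (fun k _ => hrow k)
  have hprodeq : ∏ k, csq k
      = (((d : ℝ) + 1) * u ^ 2) ^ (d - 1 - S.card)
        * (u ^ 2 * (((d : ℝ) + 1) ^ 3 / 3)) ^ d := by
    rw [hcsq, Finset.prod_ite]
    have h1 : (Finset.univ.filter fun k : Fin (d - 1 + d) => k ∈ S) = S :=
      Finset.filter_univ_mem S
    rw [Finset.prod_const, Finset.prod_ite, Finset.prod_const, Finset.prod_const]
    have h2 : (Finset.univ.filter fun k : Fin (d - 1 + d) => ¬ k ∈ S).filter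
        (fun k : Fin (d - 1 + d) => (k : ℕ) < d - 1)
        = (Finset.univ.filter fun k : Fin (d - 1 + d) => (k : ℕ) < d - 1) \ S := by
      ext k
      simp only [Finset.mem_filter, Finset.mem_sdiff, Finset.mem_univ, true_and]
      tauto
    have h3 : (Finset.univ.filter fun k : Fin (d - 1 + d) => ¬ k ∈ S).filter
        (fun k : Fin (d - 1 + d) => ¬ (k : ℕ) < d - 1)
        = Finset.univ.filter fun k : Fin (d - 1 + d) => ¬ (k : ℕ) < d - 1 := by
      ext k
      simp only [Finset.mem_filter, Finset.mem_univ, true_and]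
      constructor
      · tauto
      · intro hk; exact ⟨fun hks => hk (hSF k hks), hk⟩
    have hSsub : S ⊆ Finset.univ.filter fun k : Fin (d - 1 + d) => (k : ℕ) < d - 1 := by
      intro k hk; simp only [Finset.mem_filter, Finset.mem_univ, true_and]; exact hSF k hk
    rw [h1, h2, h3, Finset.card_sdiff_of_subset hSsub, cardF d hd, cardcoF d hd, one_pow, one_mul]
  set E : ℝ := (u * Real.sqrt ((d : ℝ) + 1)) ^ (d - 1 - S.card)
      * (u * Real.sqrt (((d : ℝ) + 1) ^ 3 / 3)) ^ d with hE
  have hE0 : 0 ≤ E := by positivity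
  have hEsq : E ^ 2 = (((d : ℝ) + 1) * u ^ 2) ^ (d - 1 - S.card)
      * (u ^ 2 * (((d : ℝ) + 1) ^ 3 / 3)) ^ d := by
    have ha : (u * Real.sqrt ((d : ℝ) + 1)) ^ 2 = ((d : ℝ) + 1) * u ^ 2 := by
      rw [mul_pow, Real.sq_sqrt hd1]; ring
    have hb : (u * Real.sqrt (((d : ℝ) + 1) ^ 3 / 3)) ^ 2
        = u ^ 2 * (((d : ℝ) + 1) ^ 3 / 3) := by
      rw [mul_pow, Real.sq_sqrt (by positivity)]
    rw [hE, mul_pow, pow_right_comm _ _ 2, pow_right_comm _ d 2, ha, hb]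
  have hfin : A.det ^ 2 ≤ E ^ 2 := by
    rw [hEsq]; exact le_trans hH (le_trans hprodle (le_of_eq hprodeq))
  have : |A.det| ≤ E := by
    rw [← Real.sqrt_sq_eq_abs]
    calc Real.sqrt (A.det ^ 2) ≤ Real.sqrt (E ^ 2) := Real.sqrt_le_sqrt hfin
      _ = E := by rw [Real.sqrt_sq hE0]
  rw [← hdetA]
  exact this

end ResultantAux

theorem resultant_coeff_bound (P : Polynomial ℤ) (d τ : ℕ) (hd : 1 ≤ d)
    (hdeg : P.natDegree = d) (hτ : ∀ i, |P.coeff i| ≤ 2 ^ τ - 1) :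
    ∀ i ≤ d - 1,
      ((abs ((_root_.sylvester (P.map Polynomial.C - Polynomial.C Polynomial.X)
          ((derivative P).map Polynomial.C) d (d - 1)).det.coeff i) : ℤ) : ℝ) <
        (3:ℝ) ^ (-(d:ℝ)/2) * ((2:ℝ) ^ τ * Real.sqrt (((d:ℝ)+1)^3)) ^ d *
          ((d - 1).choose i) * ((2:ℝ) ^ τ * Real.sqrt ((d:ℝ)+1) - 1) ^ (d - 1 - i) := by
  intro i hi
  set u : ℝ := (2:ℝ) ^ τ - 1 with hu
  have h2τ : (1:ℝ) ≤ 2 ^ τ := one_le_pow₀ (by norm_num)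
  have hu0 : 0 ≤ u := by simp only [hu]; linarith
  have hdR : (1:ℝ) ≤ (d:ℝ) := by exact_mod_cast hd
  have hsq1 : (1:ℝ) ≤ Real.sqrt ((d:ℝ) + 1) := by
    have h1 := Real.sq_sqrt (show (0:ℝ) ≤ (d:ℝ) + 1 by linarith)
    nlinarith [Real.sqrt_nonneg ((d:ℝ) + 1)]
  have hsqpos : (0:ℝ) < Real.sqrt (((d:ℝ) + 1) ^ 3) := Real.sqrt_pos.mpr (by positivity)
  set E : ℝ := (u * Real.sqrt ((d : ℝ) + 1)) ^ (d - 1 - i)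
      * (u * Real.sqrt (((d : ℝ) + 1) ^ 3 / 3)) ^ d with hE
  have hE0 : 0 ≤ E := mul_nonneg
    (pow_nonneg (mul_nonneg hu0 (Real.sqrt_nonneg _)) _)
    (pow_nonneg (mul_nonneg hu0 (Real.sqrt_nonneg _)) _)
  -- step 1 : |coeff| ≤ choose * E
  have step1 : ((abs ((_root_.sylvester (P.map Polynomial.C - Polynomial.C Polynomial.X)
        ((derivative P).map Polynomial.C) d (d - 1)).det.coeff i) : ℤ) : ℝ)
      ≤ ((d - 1).choose i : ℝ) * E := by
    rw [coeff_det_syl P d hd i]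
    set g : Finset (Fin (d - 1 + d)) → ℝ := fun S =>
      if S.card = i ∧ (∀ k ∈ S, (k : ℕ) < d - 1) then E else 0 with hg
    have hg0 : ∀ S, 0 ≤ g S := by
      intro S; rw [hg]
      dsimp only
      split
      · exact hE0
      · exact le_refl 0
    have habs : |(∑ S : Finset (Fin (d - 1 + d)),
        if S.card = i then (mixZ P d S).det else 0)|
        ≤ ∑ S : Finset (Fin (d - 1 + d)), |if S.card = i then (mixZ P d S).det else 0| :=
      Finset.abs_sum_le_sum_abs _ _
    calc ((|∑ S : Finset (Fin (d - 1 + d)), if S.card = i then (mixZ P d S).det else 0| : ℤ) : ℝ)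
        ≤ ((∑ S : Finset (Fin (d - 1 + d)),
            |if S.card = i then (mixZ P d S).det else 0| : ℤ) : ℝ) := by exact_mod_cast habs
      _ = ∑ S : Finset (Fin (d - 1 + d)),
            ((|if S.card = i then (mixZ P d S).det else 0| : ℤ) : ℝ) := by push_cast; rfl
      _ ≤ ∑ S : Finset (Fin (d - 1 + d)), g S := by
          apply Finset.sum_le_sum
          intro S _
          by_cases hcard : S.card = i
          · by_cases hsub : ∀ k ∈ S, (k : ℕ) < d - 1
            · have hle := detS_le P d τ hd hτ S hsub
              rw [hcard] at hle
              have hgS : g S = E := by rw [hg]; dsimp only; rw [if_pos ⟨hcard, hsub⟩]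
              rw [hgS]
              have hcast : ((|if S.card = i then (mixZ P d S).det else 0| : ℤ) : ℝ)
                  = |(((mixZ P d S).det : ℤ) : ℝ)| := by
                rw [if_pos hcard, Int.cast_abs]
              rw [hcast, hE, hu]
              exact hle
            · push_neg at hsub
              obtain ⟨k, hkS, hk⟩ := hsub
              have hdet0 : (mixZ P d S).det = 0 := by
                apply Matrix.det_eq_zero_of_row_eq_zero k
                intro j
                simp [mixZ, hkS, Bz, hk]
              have hcast : ((|if S.card = i then (mixZ P d S).det else 0| : ℤ) : ℝ) = 0 := by
                simp [hcard, hdet0]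
              rw [hcast]
              exact hg0 S
          · have hcast : ((|if S.card = i then (mixZ P d S).det else 0| : ℤ) : ℝ) = 0 := by
              simp [hcard]
            rw [hcast]
            exact hg0 S
      _ = ((d - 1).choose i : ℝ) * E := by
          rw [hg, ← Finset.sum_filter]
          have hfe : (Finset.univ.filter fun S : Finset (Fin (d - 1 + d)) =>
              S.card = i ∧ (∀ k ∈ S, (k : ℕ) < d - 1))
              = Finset.powersetCard i
                  (Finset.univ.filter fun k : Fin (d - 1 + d) => (k : ℕ) < d - 1) := by
            ext S
            simp only [Finset.mem_filter, Finset.mem_univ, true_and,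
              Finset.mem_powersetCard, Finset.subset_iff]
            constructor
            · rintro ⟨h1, h2⟩
              exact ⟨fun k hk => by simp [h2 k hk], h1⟩
            · rintro ⟨h1, h2⟩
              refine ⟨h2, fun k hk => ?_⟩
              have := h1 k hk
              exact this
          rw [hfe, Finset.sum_const, Finset.card_powersetCard, cardF d hd, nsmul_eq_mul]
  -- step 2 : E < target/choose
  have hEfact : E = (u * Real.sqrt ((d : ℝ) + 1)) ^ (d - 1 - i)
      * (u * (Real.sqrt (((d : ℝ) + 1) ^ 3) / Real.sqrt 3)) ^ d := by
    rw [hE, Real.sqrt_div (by positivity) 3]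
  have f1 : u * Real.sqrt ((d : ℝ) + 1) ≤ (2:ℝ) ^ τ * Real.sqrt ((d:ℝ)+1) - 1 := by
    have hus : u * Real.sqrt ((d : ℝ) + 1)
        = (2:ℝ) ^ τ * Real.sqrt ((d:ℝ)+1) - Real.sqrt ((d:ℝ)+1) := by
      rw [hu]; ring
    linarith
  have hf1pos : (0:ℝ) < (2:ℝ) ^ τ * Real.sqrt ((d:ℝ)+1) - 1 := by
    have h1 : (1:ℝ) * 1 ≤ (2:ℝ) ^ τ * Real.sqrt ((d:ℝ)+1) :=
      mul_le_mul h2τ hsq1 zero_le_one (by linarith)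
    -- need strict : 2^τ * √(d+1) > 1
    have h2 : (1:ℝ) < Real.sqrt ((d:ℝ)+1) := by
      have h3 := Real.sq_sqrt (show (0:ℝ) ≤ (d:ℝ) + 1 by linarith)
      nlinarith [Real.sqrt_nonneg ((d:ℝ) + 1)]
    nlinarith
  have f2 : u * (Real.sqrt (((d : ℝ) + 1) ^ 3) / Real.sqrt 3)
      < (2:ℝ) ^ τ * (Real.sqrt (((d : ℝ) + 1) ^ 3) / Real.sqrt 3) := by
    apply mul_lt_mul_of_pos_right
    · rw [hu]; linarith
    · positivity
  have hp1 : (u * Real.sqrt ((d : ℝ) + 1)) ^ (d - 1 - i)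
      ≤ ((2:ℝ) ^ τ * Real.sqrt ((d:ℝ)+1) - 1) ^ (d - 1 - i) :=
    pow_le_pow_left₀ (by positivity) f1 _
  have hp2 : (u * (Real.sqrt (((d : ℝ) + 1) ^ 3) / Real.sqrt 3)) ^ d
      < ((2:ℝ) ^ τ * (Real.sqrt (((d : ℝ) + 1) ^ 3) / Real.sqrt 3)) ^ d :=
    pow_lt_pow_left₀ f2 (by positivity) (by omega)
  have hElt : E < ((2:ℝ) ^ τ * Real.sqrt ((d:ℝ)+1) - 1) ^ (d - 1 - i)
      * ((2:ℝ) ^ τ * (Real.sqrt (((d : ℝ) + 1) ^ 3) / Real.sqrt 3)) ^ d := by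
    rw [hEfact]
    exact mul_lt_mul' hp1 hp2 (by positivity) (pow_pos hf1pos _)
  -- step 3 : rewrite the RHS
  have hrw : (3:ℝ) ^ (-(d:ℝ)/2) * ((2:ℝ) ^ τ * Real.sqrt (((d:ℝ)+1)^3)) ^ d *
        ((d - 1).choose i : ℝ) * ((2:ℝ) ^ τ * Real.sqrt ((d:ℝ)+1) - 1) ^ (d - 1 - i)
      = ((d - 1).choose i : ℝ) * (((2:ℝ) ^ τ * Real.sqrt ((d:ℝ)+1) - 1) ^ (d - 1 - i)
          * ((2:ℝ) ^ τ * (Real.sqrt (((d : ℝ) + 1) ^ 3) / Real.sqrt 3)) ^ d) := by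
    have h3 : ((2:ℝ) ^ τ * (Real.sqrt (((d : ℝ) + 1) ^ 3) / Real.sqrt 3)) ^ d
        = ((2:ℝ) ^ τ * Real.sqrt (((d:ℝ)+1)^3)) ^ d * ((Real.sqrt 3)⁻¹) ^ d := by
      rw [← mul_pow]; congr 1; field_simp
    have h4 : ((Real.sqrt 3)⁻¹ : ℝ) ^ d = (3:ℝ) ^ (-(d:ℝ)/2) := by
      have h5 : (Real.sqrt 3)⁻¹ = (3:ℝ) ^ (-(1/2) : ℝ) := by
        rw [Real.sqrt_eq_rpow, ← Real.rpow_neg (by norm_num)]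
      rw [h5, ← Real.rpow_natCast ((3:ℝ) ^ (-(1/2) : ℝ)) d, ← Real.rpow_mul (by norm_num)]
      congr 1
      ring
    rw [h3, h4]
    ring
  rw [hrw]
  calc ((abs ((_root_.sylvester (P.map Polynomial.C - Polynomial.C Polynomial.X)
        ((derivative P).map Polynomial.C) d (d - 1)).det.coeff i) : ℤ) : ℝ)
      ≤ ((d - 1).choose i : ℝ) * E := step1
    _ < ((d - 1).choose i : ℝ) * (((2:ℝ) ^ τ * Real.sqrt ((d:ℝ)+1) - 1) ^ (d - 1 - i)
          * ((2:ℝ) ^ τ * (Real.sqrt (((d : ℝ) + 1) ^ 3) / Real.sqrt 3)) ^ d) := by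
        apply mul_lt_mul_of_pos_left hElt
        exact_mod_cast Nat.choose_pos hi
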